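/- Let κ be an uncountable cardinal, {X_λ}_{λ∈Λ} a family of topological spaces each of tightness < κ such that every finite product ∏_{i=1}^n X_{λ_i} has tightness < κ, and p ∈ ∏_λ X_λ. Then the Σ_κ-product Σ_κ(p) = {x ∈ ∏_λ X_λ : |{λ : x_λ ≠ p_λ}| < κ} has tightness < κ. (Special case sufficient: for X_λ = ℝ for all λ, the subspace {x ∈ ℝ^Λ : |{λ : x_λ ≠ p_λ}| < κ} of ℝ^Λ has tightness < κ for regular uncountable κ.) -/

import Mathlib

universe u

open Cardinal Set

private lemma myUnionLt {γ ι : Type u} {f : ι → Set γ} {κ : Cardinal.{u}}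
    (hreg : κ.IsRegular) (hι : #ι < κ) (hf : ∀ i, #(f i) < κ) : #(⋃ i, f i) < κ :=
  Cardinal.mk_iUnion_le_sum_mk.trans_lt (Cardinal.sum_lt_of_isRegular hreg hι hf)

/-- The tightness of `Z` is (strictly) less than `κ`. -/
def TightnessLT (Z : Type u) [TopologicalSpace Z] (κ : Cardinal.{u}) : Prop :=
  ∀ (A : Set Z) (z : Z), z ∈ closure A →
    ∃ B ⊆ A, Cardinal.mk B < κ ∧ z ∈ closure B

/-- Kombarov–Malykhin: if every finite subproduct has tightness `< κ`, then the
`Σ_κ`-product about the base point `p` has tightness `< κ`. -/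
theorem sigmaProduct_tightness {Λ : Type u} (X : Λ → Type u)
    [∀ l, TopologicalSpace (X l)] (κ : Cardinal.{u})
    (hκ : Cardinal.aleph0 < κ) (hreg : κ.IsRegular)
    (hfin : ∀ (n : ℕ) (l : Fin n → Λ), TightnessLT (∀ i, X (l i)) κ)
    (p : ∀ l, X l) :
    TightnessLT {x : ∀ l, X l // Cardinal.mk {l | x l ≠ p l} < κ} κ := by
  classical
  set SG := {x : ∀ l, X l // Cardinal.mk {l | x l ≠ p l} < κ} with hSG
  intro A z hz
  -- the projection to a finite set of coordinates
  set π : ∀ F : Finset Λ, SG → ∀ i : Fin F.toList.length, X (F.toList.get i) :=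
    fun F x i => x.1 (F.toList.get i) with hπ
  have hπc : ∀ F : Finset Λ, Continuous (π F) := fun F =>
    continuous_pi fun i => (continuous_apply (F.toList.get i)).comp continuous_subtype_val
  -- choose small witnessing subsets of A for each finite set of coordinates
  have key : ∀ F : Finset Λ, ∃ T : Set SG, T ⊆ A ∧ #T < κ ∧
      π F z ∈ closure (π F '' T) := by
    intro F
    have h1 : π F z ∈ closure (π F '' A) :=
      map_mem_closure (hπc F) hz (mapsTo_image _ _)
    obtain ⟨B', hB'sub, hB'card, hB'cl⟩ := hfin F.toList.length F.toList.get (π F '' A) (π F z) h1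
    have hch : ∀ y : B', ∃ a : SG, a ∈ A ∧ π F a = y.1 := fun y => by
      obtain ⟨a, ha, hay⟩ := hB'sub y.2
      exact ⟨a, ha, hay⟩
    choose g hg1 hg2 using hch
    refine ⟨Set.range g, ?_, ?_, ?_⟩
    · rintro _ ⟨y, rfl⟩; exact hg1 y
    · exact Cardinal.mk_range_le.trans_lt hB'card
    · refine closure_mono ?_ hB'cl
      rintro y hy
      exact ⟨g ⟨y, hy⟩, Set.mem_range_self _, hg2 ⟨y, hy⟩⟩
  choose AF hAF1 hAF2 hAF3 using key
  -- the support of a set of points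
  set supp : Set SG → Set Λ := fun T => ⋃ b : T, {l | b.1.1 l ≠ p l} with hsupp
  -- the recursion
  set nextB : Set SG → Set Λ → Set SG :=
    fun Bn Sn => Bn ∪ ⋃ L : List Sn, AF (L.map Subtype.val).toFinset with hnextB
  set step : Set SG × Set Λ → Set SG × Set Λ :=
    fun q => (nextB q.1 q.2, q.2 ∪ supp (nextB q.1 q.2)) with hstep
  set P : ℕ → Set SG × Set Λ := fun n => step^[n] (∅, {l | z.1 l ≠ p l}) with hP
  have hPsucc : ∀ n, P (n + 1) = step (P n) := fun n => Function.iterate_succ_apply' step n _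
  -- basic properties
  have hmono1 : ∀ n, (P n).1 ⊆ (P (n + 1)).1 := fun n => by
    rw [hPsucc]; exact Set.subset_union_left
  have hmono2 : ∀ n, (P n).2 ⊆ (P (n + 1)).2 := fun n => by
    rw [hPsucc]; exact Set.subset_union_left
  have hmonoB : Monotone fun n => (P n).1 := monotone_nat_of_le_succ hmono1
  have hmonoS : Monotone fun n => (P n).2 := monotone_nat_of_le_succ hmono2
  have hsubA : ∀ n, (P n).1 ⊆ A := by
    intro n
    induction n with
    | zero => exact Set.empty_subset _
    | succ n ih =>
      rw [hPsucc]
      rintro b (hb | hb)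
      · exact ih hb
      · obtain ⟨s, ⟨L, rfl⟩, hbs⟩ := hb
        exact hAF1 _ hbs
  have hcard : ∀ n, #(P n).1 < κ ∧ #(P n).2 < κ := by
    intro n
    induction n with
    | zero => exact ⟨(Cardinal.mk_emptyCollection _).trans_lt hreg.pos, z.2⟩
    | succ n ih =>
      rw [hPsucc]
      have hLcard : #(List (P n).2) < κ :=
        (Cardinal.mk_list_le_max _).trans_lt (max_lt hκ ih.2)
      have hB : #(nextB (P n).1 (P n).2) < κ := by
        refine (Cardinal.mk_union_le _ _).trans_lt
          (Cardinal.add_lt_of_lt hreg.aleph0_le ih.1 ?_)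
        exact myUnionLt hreg hLcard fun L => hAF2 _
      refine ⟨hB, (Cardinal.mk_union_le _ _).trans_lt
        (Cardinal.add_lt_of_lt hreg.aleph0_le ih.2 ?_)⟩
      exact myUnionLt hreg hB fun b => b.1.2
  have hsuppB : ∀ n, ∀ b ∈ (P n).1, {l | b.1 l ≠ p l} ⊆ (P n).2 := by
    intro n
    induction n with
    | zero => intro b hb; exact absurd hb (Set.notMem_empty _)
    | succ n _ =>
      intro b hb
      rw [hPsucc] at hb ⊢
      refine Set.subset_union_of_subset_right ?_ _
      exact Set.subset_iUnion (fun c : (nextB (P n).1 (P n).2) => {l | c.1.1 l ≠ p l}) ⟨b, hb⟩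
  have hAFsub : ∀ n, ∀ F : Finset Λ, ↑F ⊆ (P n).2 → AF F ⊆ (P (n + 1)).1 := by
    intro n F hF
    rw [hPsucc]
    refine Set.subset_union_of_subset_right ?_ _
    have hL : ∃ L : List (P n).2, (L.map Subtype.val).toFinset = F := by
      refine ⟨F.toList.attach.map fun x => ⟨x.1, hF (Finset.mem_coe.mpr (Finset.mem_toList.mp x.2))⟩, ?_⟩
      rw [List.map_map]
      have : (Subtype.val ∘ fun x : {x // x ∈ F.toList} =>
          (⟨x.1, hF (Finset.mem_coe.mpr (Finset.mem_toList.mp x.2))⟩ : (P n).2)) =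
          Subtype.val := rfl
      rw [this, List.attach_map_subtype_val, Finset.toList_toFinset]
    obtain ⟨L, hLF⟩ := hL
    exact hLF ▸ Set.subset_iUnion (fun L : List (P n).2 => AF (L.map Subtype.val).toFinset) L
  -- assemble B and S
  set B : Set SG := ⋃ n : ULift.{u} ℕ, (P n.down).1 with hB
  set S : Set Λ := ⋃ n, (P n).2 with hS
  refine ⟨B, Set.iUnion_subset fun n => hsubA n.down, ?_, ?_⟩
  · exact myUnionLt hreg (by simpa using hκ) fun n => (hcard n.down).1
  -- closure
  rw [mem_closure_iff]
  intro o ho hzo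
  obtain ⟨U, hU, rfl⟩ := isOpen_induced_iff.mp ho
  obtain ⟨I, u, hu, hIu⟩ := isOpen_pi_iff.mp hU z.1 hzo
  -- split the coordinates
  set F₁ : Finset Λ := I.filter (· ∈ S) with hF₁
  have hF₁S : ↑F₁ ⊆ S := fun l hl => (Finset.mem_filter.mp hl).2
  have hF₁I : F₁ ⊆ I := Finset.filter_subset _ _
  -- find n containing F₁
  have hex : ∀ l ∈ F₁, ∃ m, l ∈ (P m).2 := fun l hl => Set.mem_iUnion.mp (hF₁S hl)
  choose m hm using hex
  set n : ℕ := F₁.attach.sup fun x => m x.1 x.2 with hn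
  have hF₁n : ↑F₁ ⊆ (P n).2 := by
    intro l hl
    exact hmonoS (Finset.le_sup (f := fun x : F₁ => m x.1 x.2) (Finset.mem_attach _ ⟨l, hl⟩))
      (hm l hl)
  -- the open box in the finite product
  set V : Set (∀ i : Fin F₁.toList.length, X (F₁.toList.get i)) :=
    Set.univ.pi fun i => u (F₁.toList.get i) with hV
  have hgetI : ∀ i : Fin F₁.toList.length, F₁.toList.get i ∈ I :=
    fun i => hF₁I (Finset.mem_toList.mp (List.get_mem _ i))
  have hVopen : IsOpen V :=
    isOpen_set_pi Set.finite_univ fun i _ => (hu _ (hgetI i)).1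
  have hzV : π F₁ z ∈ V := fun i _ => (hu _ (hgetI i)).2
  obtain ⟨y, hyV, hyim⟩ := (mem_closure_iff.mp (hAF3 F₁) V hVopen hzV)
  obtain ⟨b, hbAF, rfl⟩ := hyim
  refine ⟨b, ?_, Set.mem_iUnion.mpr ⟨⟨n + 1⟩, hAFsub n F₁ hF₁n hbAF⟩⟩
  -- b.1 ∈ U
  refine hIu fun l hl => ?_
  by_cases hlS : l ∈ S
  · have hlF₁ : l ∈ F₁ := Finset.mem_filter.mpr ⟨hl, hlS⟩
    obtain ⟨i, hi⟩ := List.mem_iff_get.mp (Finset.mem_toList.mpr hlF₁)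
    subst hi
    exact hyV i (Set.mem_univ i)
  · have hbB : b ∈ (P (n + 1)).1 := hAFsub n F₁ hF₁n hbAF
    have hbl : b.1 l = p l := by
      by_contra hne
      exact hlS (Set.mem_iUnion.mpr ⟨n + 1, hsuppB (n + 1) b hbB hne⟩)
    have hzl : z.1 l = p l := by
      by_contra hne
      refine hlS (Set.mem_iUnion.mpr ⟨0, ?_⟩)
      exact hne
    rw [hbl, ← hzl]
    exact (hu l hl).2
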